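/- Let Ω ⊆ EuclideanSpace ℝ (Fin 3) be open and connected, and let f : EuclideanSpace ℝ (Fin 3) → ℝ be twice continuously differentiable on Ω (ContDiffOn ℝ 2 f Ω) with f x > 0 for all x ∈ Ω. Assume that ‖gradient f x‖ = 1 for every x ∈ Ω, and that the Hessian of (1/2)·f² is the identity bilinear form on Ω, i.e., for every x ∈ Ω and all vectors v, w, (iteratedFDeriv ℝ 2 (fun y => f y ^ 2 / 2) x) v w = ⟪v, w⟫. Then there exists a point x₀ ∈ EuclideanSpace ℝ (Fin 3) such that f x = ‖x − x₀‖ for all x ∈ Ω. -/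

import Mathlib

open scoped RealInnerProductSpace

/-- A function with zero derivative on an open preconnected set is constant there. -/
lemma eq_of_fderiv_zero_aux {E F : Type*} [NormedAddCommGroup E] [NormedSpace ℝ E]
    [NormedAddCommGroup F] [NormedSpace ℝ F] {s : Set E} (hs : IsOpen s)
    (hs' : IsPreconnected s) {g : E → F}
    (hg : ∀ x ∈ s, HasFDerivAt g (0 : E →L[ℝ] F) x) {x y : E}
    (hx : x ∈ s) (hy : y ∈ s) : g x = g y := by
  haveI := Subtype.preconnectedSpace hs'
  have hl : IsLocallyConstant (fun z : s => g z) := by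
    rw [IsLocallyConstant.iff_eventually_eq]
    rintro ⟨z, hz⟩
    obtain ⟨ε, hε, hball⟩ := Metric.isOpen_iff.1 hs z hz
    have hconst : ∀ w ∈ Metric.ball z ε, g w = g z := fun w hw =>
      (convex_ball z ε).is_const_of_fderivWithin_eq_zero
        (fun u hu => (hg u (hball hu)).differentiableAt.differentiableWithinAt)
        (fun u hu => by
          rw [fderivWithin_of_isOpen Metric.isOpen_ball hu]
          exact (hg u (hball hu)).fderiv)
        hw (Metric.mem_ball_self hε)
    have hmem : (Subtype.val : s → E) ⁻¹' Metric.ball z ε ∈ nhds (⟨z, hz⟩ : s) :=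
      continuousAt_subtype_val.preimage_mem_nhds (Metric.ball_mem_nhds z hε)
    exact Filter.eventually_of_mem hmem fun w hw => hconst _ hw
  exact hl.apply_eq_of_preconnectedSpace ⟨x, hx⟩ ⟨y, hy⟩

/-- The inner product, as a continuous linear map into the dual, over ℝ. -/
noncomputable def innerCLM : EuclideanSpace ℝ (Fin 3) →L[ℝ]
    (EuclideanSpace ℝ (Fin 3) →L[ℝ] ℝ) :=
  LinearMap.toContinuousLinearMap
    { toFun := fun v => innerSL ℝ v
      map_add' := by intro a b; ext w; simp [inner_add_left]
      map_smul' := by intro c a; ext w; simp [inner_smul_left] }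

@[simp] lemma innerCLM_apply (v w : EuclideanSpace ℝ (Fin 3)) :
    innerCLM v w = ⟪v, w⟫ := rfl

theorem rigidity_distance_function
    (Ω : Set (EuclideanSpace ℝ (Fin 3))) (hΩ : IsOpen Ω) (hconn : IsConnected Ω)
    (f : EuclideanSpace ℝ (Fin 3) → ℝ)
    (hf : ContDiffOn ℝ 2 f Ω)
    (hpos : ∀ x ∈ Ω, 0 < f x)
    (hgrad : ∀ x ∈ Ω, ‖gradient f x‖ = 1)
    (hhess : ∀ x ∈ Ω, ∀ v w : EuclideanSpace ℝ (Fin 3),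
      (iteratedFDeriv ℝ 2 (fun y => f y ^ 2 / 2) x) ![v, w] = ⟪v, w⟫) :
    ∃ x₀ : EuclideanSpace ℝ (Fin 3), ∀ x ∈ Ω, f x = ‖x - x₀‖ := by
  classical
  set G : EuclideanSpace ℝ (Fin 3) → ℝ := fun y => f y ^ 2 / 2 with hGdef
  set φ : EuclideanSpace ℝ (Fin 3) → (EuclideanSpace ℝ (Fin 3) →L[ℝ] ℝ) := fderiv ℝ G with hφdef
  -- G is C² at each point of Ω
  have hGat : ∀ x ∈ Ω, ContDiffAt ℝ 2 G x := by
    intro x hx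
    exact (((hf.pow 2).div_const 2).contDiffAt (hΩ.mem_nhds hx))
  -- fderiv of φ is innerCLM on Ω
  have hφderiv : ∀ x ∈ Ω, fderiv ℝ φ x = innerCLM := by
    intro x hx
    ext v w
    have h := hhess x hx v w
    rw [iteratedFDeriv_two_apply] at h
    simp only [Matrix.cons_val_zero, Matrix.cons_val_one, Matrix.head_cons] at h
    exact h
  -- ψ := φ - innerCLM has zero derivative on Ω
  set ψ : EuclideanSpace ℝ (Fin 3) → (EuclideanSpace ℝ (Fin 3) →L[ℝ] ℝ) := fun x => φ x - innerCLM x with hψdef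
  have hψderiv : ∀ x ∈ Ω, HasFDerivAt ψ (0 : EuclideanSpace ℝ (Fin 3) →L[ℝ] (EuclideanSpace ℝ (Fin 3) →L[ℝ] ℝ)) x := by
    intro x hx
    have hφdiff : DifferentiableAt ℝ φ x := by
      have h1 : ContDiffAt ℝ 1 (fderiv ℝ G) x :=
        (hGat x hx).fderiv_right (by norm_num)
      exact h1.differentiableAt (by norm_num)
    have h2 : HasFDerivAt φ innerCLM x := by
      have := hφdiff.hasFDerivAt
      rwa [hφderiv x hx] at this
    have h3 : HasFDerivAt (fun x : EuclideanSpace ℝ (Fin 3) => innerCLM x) innerCLM x := innerCLM.hasFDerivAt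
    have h4 := h2.sub h3
    simp only [sub_self] at h4
    exact h4
  -- ψ is constant on Ω
  obtain ⟨x₁, hx₁⟩ := hconn.nonempty
  set c : EuclideanSpace ℝ (Fin 3) →L[ℝ] ℝ := ψ x₁ with hcdef
  have hψconst : ∀ x ∈ Ω, ψ x = c :=
    fun x hx => eq_of_fderiv_zero_aux hΩ hconn.isPreconnected hψderiv hx hx₁
  -- choose x₀
  set x₀ : EuclideanSpace ℝ (Fin 3) := -((InnerProductSpace.toDual ℝ (EuclideanSpace ℝ (Fin 3))).symm c) with hx₀def
  refine ⟨x₀, fun x hx => ?_⟩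
  -- φ x = toDual (x - x₀)
  have hφeq : φ x = InnerProductSpace.toDual ℝ (EuclideanSpace ℝ (Fin 3)) (x - x₀) := by
    have h1 : φ x = innerCLM x + c := by
      have h := hψconst x hx
      have : φ x - innerCLM x = c := h
      linear_combination (norm := module) this
    ext w
    rw [h1]
    have hc : c w = ⟪(InnerProductSpace.toDual ℝ (EuclideanSpace ℝ (Fin 3))).symm c, w⟫ := by
      conv_lhs => rw [← (InnerProductSpace.toDual ℝ (EuclideanSpace ℝ (Fin 3))).apply_symm_apply c]
      rw [InnerProductSpace.toDual_apply_apply]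
    simp only [ContinuousLinearMap.add_apply, innerCLM_apply,
      InnerProductSpace.toDual_apply_apply, hx₀def, sub_neg_eq_add, inner_add_left, hc]
  -- ‖φ x‖ = ‖x - x₀‖
  have hnorm1 : ‖φ x‖ = ‖x - x₀‖ := by
    rw [hφeq]
    exact (InnerProductSpace.toDual ℝ (EuclideanSpace ℝ (Fin 3))).norm_map _
  -- ‖φ x‖ = f x
  have hfd : DifferentiableAt ℝ f x :=
    ((hf.contDiffAt (hΩ.mem_nhds hx)).differentiableAt (by norm_num))
  have hG' : HasFDerivAt G (f x • fderiv ℝ f x) x := by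
    have h1 : HasFDerivAt f (fderiv ℝ f x) x := hfd.hasFDerivAt
    have h2 := (h1.mul h1).const_mul (1/2 : ℝ)
    have heq : G = fun y => (1/2 : ℝ) * (f y * f y) := by
      funext y; simp [hGdef]; ring
    rw [heq]
    exact h2.congr_fderiv (by ext v; simp; ring)
  have hnorm2 : ‖φ x‖ = f x := by
    rw [hφdef, hG'.fderiv, norm_smul (f x) (fderiv ℝ f x)]
    have h3 : ‖fderiv ℝ f x‖ = 1 := by
      have := hgrad x hx
      rwa [gradient, LinearIsometryEquiv.norm_map] at this
    rw [h3, mul_one, Real.norm_eq_abs, abs_of_pos (hpos x hx)]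
  rw [← hnorm2, hnorm1]
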